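/- (Theorem 1, feasibility of the optimization constraints.) Let φ ≥ 1, n ≥ 2φ−1, M ≥ 1, and N ≥ 1. For each agent i ∈ {1,…,N} let π^i_0, …, π^i_M ∈ ℝ^3 be waypoints; for each i and m ∈ {1,…,M} let S^i_m ⊆ ℝ^3 be a convex set containing the segment [π^i_{m−1}, π^i_m]; and for each pair i < j and each m let R^{i,j}_m ⊆ ℝ^3 be a convex set containing the segment [π^j_{m−1} − π^i_{m−1}, π^j_m − π^i_m]. Then there exist control points c^i_{m,k} ∈ ℝ^3 (i ∈ {1,…,N}, m ∈ {1,…,M}, k ∈ {0,…,n}) — namely c^i_{m,k} = π^i_{m−1} for k ≤ φ−1 and c^i_{m,k} = π^i_m for k ≥ n−φ+1, with the remaining c^i_{m,k} any points of [π^i_{m−1}, π^i_m] — such that: (1) c^i_{1,0} = π^i_0 and c^i_{M,n} = π^i_M for all i; (2) the piecewise curve p^i defined on [0,M] by p^i(t) = Σ_{k=0}^{n} c^i_{m,k} B_{k,n}(t−(m−1)) for t ∈ [m−1, m] is continuously differentiable up to order φ−1; (3) c^i_{m,k} ∈ S^i_m for all i, m, k; and (4) c^j_{m,k} − c^i_{m,k}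 ∈ R^{i,j}_m for all i < j, m, k. -/

import Mathlib

/-- The Bernstein basis polynomial `B_{k,n}(t) = C(n,k) t^k (1-t)^(n-k)`. -/
noncomputable def bernsteinBasis (n k : ℕ) (t : ℝ) : ℝ :=
  (n.choose k : ℝ) * t ^ k * (1 - t) ^ (n - k)

private lemma pp_hasDerivAt (a : ℕ) (x : ℝ) :
    HasDerivAt (fun y : ℝ => (max y 0) ^ (a + 2)) (((a : ℝ) + 2) * (max x 0) ^ (a + 1)) x := by
  rcases lt_trichotomy x 0 with hx | hx | hx
  · have heq : (fun y : ℝ => (max y 0) ^ (a + 2)) =ᶠ[nhds x] fun _ => (0 : ℝ) := by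
      filter_upwards [Iio_mem_nhds hx] with y hy
      rw [max_eq_right (le_of_lt hy)]
      simp
    have h := (hasDerivAt_const x (0 : ℝ)).congr_of_eventuallyEq heq
    simpa [max_eq_right hx.le] using h
  · subst hx
    have h : HasDerivAt (fun y : ℝ => (max y 0) ^ (a + 2)) 0 0 := by
      rw [hasDerivAt_iff_isLittleO, Asymptotics.isLittleO_iff]
      intro c hc
      have hev : ∀ᶠ y : ℝ in nhds 0, |y| < min c 1 := by
        filter_upwards [Metric.ball_mem_nhds (0 : ℝ) (lt_min hc one_pos)] with y hy
        simpa [Real.dist_eq] using hy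
      filter_upwards [hev] with y hy
      have h1 : |y| ≤ 1 := le_of_lt (lt_of_lt_of_le hy (min_le_right _ _))
      have hcy : |y| ≤ c := le_of_lt (lt_of_lt_of_le hy (min_le_left _ _))
      have hm0 : (0 : ℝ) ≤ max y 0 := le_max_right _ _
      have hmax : max y 0 ≤ |y| := max_le (le_abs_self y) (abs_nonneg y)
      have key : (max y 0) ^ (a + 2) ≤ c * |y| := by
        calc (max y 0) ^ (a + 2) ≤ |y| ^ (a + 2) := pow_le_pow_left₀ hm0 hmax _
          _ = |y| ^ (a + 1) * |y| := by ring
          _ ≤ c * |y| := by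
              have hle : |y| ^ (a + 1) ≤ |y| :=
                pow_le_of_le_one (abs_nonneg y) h1 (Nat.succ_ne_zero a)
              nlinarith [abs_nonneg y]
      simpa [Real.norm_eq_abs, abs_pow, abs_of_nonneg hm0] using key
    simpa using h
  · have heq : (fun y : ℝ => (max y 0) ^ (a + 2)) =ᶠ[nhds x] fun y => y ^ (a + 2) := by
      filter_upwards [Ioi_mem_nhds hx] with y hy
      rw [max_eq_left (le_of_lt hy)]
    have h := (hasDerivAt_pow (a + 2) x).congr_of_eventuallyEq heq
    have : ((a : ℝ) + 2) * (max x 0) ^ (a + 1) = (↑(a + 2) : ℝ) * x ^ (a + 2 - 1) := by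
      rw [max_eq_left hx.le]; push_cast; norm_num
    rw [this]
    exact h

private lemma pp_contDiff (b : ℕ) :
    ContDiff ℝ b (fun x : ℝ => (max x 0) ^ (b + 1)) := by
  induction b with
  | zero =>
    rw [show ((0 : ℕ) : WithTop ℕ∞) = 0 by rfl, contDiff_zero]
    simpa using (continuous_id.max continuous_const)
  | succ b ih =>
    rw [show ((b + 1 : ℕ) : WithTop ℕ∞) = (b : ℕ) + 1 by push_cast; rfl]
    rw [contDiff_succ_iff_deriv]
    refine ⟨fun x => (pp_hasDerivAt b x).differentiableAt, ?_, ?_⟩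
    · intro h; exact absurd h (by simp)
    · have hd : deriv (fun y : ℝ => (max y 0) ^ (b + 2)) =
          fun x => ((b : ℝ) + 2) * (max x 0) ^ (b + 1) :=
        funext fun x => (pp_hasDerivAt b x).deriv
      rw [hd]
      exact contDiff_const.mul ih

private lemma bernsteinBasis_eq_eval (n k : ℕ) (t : ℝ) :
    bernsteinBasis n k t = (bernsteinPolynomial ℝ n k).eval t := by
  simp [bernsteinBasis, bernsteinPolynomial]

private lemma bernsteinBasis_sum (n : ℕ) (t : ℝ) :
    ∑ k ∈ Finset.range (n + 1), bernsteinBasis n k t = 1 := by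
  have h := congrArg (Polynomial.eval t) (bernsteinPolynomial.sum ℝ n)
  simpa [Polynomial.eval_finset_sum, bernsteinBasis_eq_eval] using h

private lemma bernsteinBasis_sum_smul (n : ℕ) (t : ℝ) :
    ∑ k ∈ Finset.range (n + 1), (k : ℝ) * bernsteinBasis n k t = n * t := by
  have h := congrArg (Polynomial.eval t) (bernsteinPolynomial.sum_smul ℝ n)
  simpa [Polynomial.eval_finset_sum, bernsteinBasis_eq_eval, mul_comm] using h

private lemma segment_mem_aux {E : Type*} [AddCommGroup E] [Module ℝ E] (a b : E) {θ : ℝ}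
    (h0 : 0 ≤ θ) (h1 : θ ≤ 1) : a + θ • (b - a) ∈ segment ℝ a b :=
  ⟨1 - θ, θ, by linarith, h0, by ring, by module⟩

private lemma feasible_of_theta_g (φ n M N : ℕ)
    (hφ : 1 ≤ φ) (hn : 2 * φ - 1 ≤ n) (hM : 1 ≤ M)
    (wp : ℕ → ℕ → EuclideanSpace ℝ (Fin 3))
    (S : ℕ → ℕ → Set (EuclideanSpace ℝ (Fin 3)))
    (hSseg : ∀ i m, 1 ≤ i → i ≤ N → 1 ≤ m → m ≤ M →
      segment ℝ (wp i (m - 1)) (wp i m) ⊆ S i m)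
    (R : ℕ → ℕ → ℕ → Set (EuclideanSpace ℝ (Fin 3)))
    (hRseg : ∀ i j m, 1 ≤ i → i < j → j ≤ N → 1 ≤ m → m ≤ M →
      segment ℝ (wp j (m - 1) - wp i (m - 1)) (wp j m - wp i m) ⊆ R i j m)
    (θ : ℕ → ℝ)
    (hθ0 : ∀ k ≤ φ - 1, θ k = 0)
    (hθ1 : ∀ k, n - φ + 1 ≤ k → k ≤ n → θ k = 1)
    (hθmem : ∀ k ≤ n, 0 ≤ θ k ∧ θ k ≤ 1)
    (g : ℝ → ℝ)
    (hg : ContDiff ℝ (φ - 1 : ℕ) g)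
    (hg0 : ∀ s : ℝ, s ≤ 0 → g s = 0)
    (hg1 : ∀ s : ℝ, 1 ≤ s → g s = 1)
    (hgf : ∀ s ∈ Set.Icc (0:ℝ) 1,
      g s = ∑ k ∈ Finset.range (n + 1), θ k * bernsteinBasis n k s) :
    ∃ c : ℕ → ℕ → ℕ → EuclideanSpace ℝ (Fin 3),
      (∀ i m, 1 ≤ i → i ≤ N → 1 ≤ m → m ≤ M →
        (∀ k ≤ φ - 1, c i m k = wp i (m - 1)) ∧
        (∀ k, n - φ + 1 ≤ k → k ≤ n → c i m k = wp i m) ∧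
        (∀ k ≤ n, c i m k ∈ segment ℝ (wp i (m - 1)) (wp i m))) ∧
      (∀ i, 1 ≤ i → i ≤ N → c i 1 0 = wp i 0 ∧ c i M n = wp i M) ∧
      (∀ i, 1 ≤ i → i ≤ N → ∃ P : ℝ → EuclideanSpace ℝ (Fin 3),
        ContDiffOn ℝ (φ - 1 : ℕ) P (Set.Icc (0 : ℝ) M) ∧
        ∀ m, 1 ≤ m → m ≤ M → ∀ t ∈ Set.Icc ((m : ℝ) - 1) (m : ℝ),
          P t = ∑ k ∈ Finset.range (n + 1), bernsteinBasis n k (t - ((m : ℝ) - 1)) • c i m k) ∧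
      (∀ i m k, 1 ≤ i → i ≤ N → 1 ≤ m → m ≤ M → k ≤ n → c i m k ∈ S i m) ∧
      (∀ i j m k, 1 ≤ i → i < j → j ≤ N → 1 ≤ m → m ≤ M → k ≤ n →
        c j m k - c i m k ∈ R i j m) := by
  have hn1 : 1 ≤ n := by omega
  refine ⟨fun i m k => wp i (m - 1) + θ k • (wp i m - wp i (m - 1)), ?_, ?_, ?_, ?_, ?_⟩
  · intro i m _ _ _ _
    refine ⟨fun k hk => by simp [hθ0 k hk], fun k hk1 hk2 => by simp [hθ1 k hk1 hk2],
      fun k hk => segment_mem_aux _ _ (hθmem k hk).1 (hθmem k hk).2⟩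
  · intro i _ _
    constructor
    · simp [hθ0 0 (Nat.zero_le _)]
    · simp [hθ1 n (by omega : n - φ + 1 ≤ n) le_rfl]
  · intro i _ _
    refine ⟨fun t => wp i 0 + ∑ m ∈ Finset.Ioc 0 M,
        g (t - ((m : ℝ) - 1)) • (wp i m - wp i (m - 1)), ?_, ?_⟩
    · refine ContDiff.contDiffOn ?_
      refine contDiff_const.add (ContDiff.sum fun m _ => ?_)
      exact (hg.comp (contDiff_id.sub contDiff_const)).smul contDiff_const
    · intro m' hm'1 hm'M t ht
      obtain ⟨p, rfl⟩ : ∃ p, m' = p + 1 := ⟨m' - 1, by omega⟩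
      obtain ⟨ht1, ht2⟩ := ht
      have hpc : ((p + 1 : ℕ) : ℝ) = (p : ℝ) + 1 := by push_cast; ring
      have ht1' : (p : ℝ) ≤ t := by rw [hpc] at ht1; linarith
      have ht2' : t ≤ (p : ℝ) + 1 := by rw [hpc] at ht2; exact ht2
      set s : ℝ := t - (((p + 1 : ℕ) : ℝ) - 1) with hs
      have hs0 : 0 ≤ s := by rw [hs, hpc]; linarith
      have hs1 : s ≤ 1 := by rw [hs, hpc]; linarith
      set T : ℕ → EuclideanSpace ℝ (Fin 3) :=
        fun m => g (t - ((m : ℝ) - 1)) • (wp i m - wp i (m - 1)) with hT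
      have tele : ∀ j : ℕ, ∑ m ∈ Finset.Ioc 0 j, (wp i m - wp i (m - 1)) = wp i j - wp i 0 := by
        intro j
        induction j with
        | zero => simp
        | succ j ih =>
          rw [Finset.sum_Ioc_succ_top (Nat.zero_le _), ih]
          simp only [Nat.add_sub_cancel]
          abel
      have hsplit1 : (∑ m ∈ Finset.Ioc 0 (p + 1), T m) + ∑ m ∈ Finset.Ioc (p + 1) M, T m
          = ∑ m ∈ Finset.Ioc 0 M, T m :=
        Finset.sum_Ioc_consecutive T (Nat.zero_le _) hm'M
      have hzero : ∑ m ∈ Finset.Ioc (p + 1) M, T m = 0 := by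
        refine Finset.sum_eq_zero fun m hm => ?_
        obtain ⟨hm1, _⟩ := Finset.mem_Ioc.mp hm
        have hcast : ((p : ℝ) + 1) + 1 ≤ (m : ℝ) := by exact_mod_cast hm1
        have : t - ((m : ℝ) - 1) ≤ 0 := by linarith
        rw [hT]
        simp only [hg0 _ this, zero_smul]
      have hsplit2 : ∑ m ∈ Finset.Ioc 0 (p + 1), T m = (∑ m ∈ Finset.Ioc 0 p, T m) + T (p + 1) :=
        Finset.sum_Ioc_succ_top (Nat.zero_le _) T
      have hone : ∑ m ∈ Finset.Ioc 0 p, T m = wp i p - wp i 0 := by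
        rw [← tele p]
        refine Finset.sum_congr rfl fun m hm => ?_
        obtain ⟨_, hm2⟩ := Finset.mem_Ioc.mp hm
        have hcast : (m : ℝ) ≤ (p : ℝ) := by exact_mod_cast hm2
        have harg : 1 ≤ t - ((m : ℝ) - 1) := by linarith
        rw [hT]
        simp only [hg1 _ harg, one_smul]
      have hlhs : wp i 0 + ∑ m ∈ Finset.Ioc 0 M, T m
          = wp i p + g s • (wp i (p + 1) - wp i p) := by
        rw [← hsplit1, hzero, hsplit2, hone, hT]
        simp only [Nat.add_sub_cancel, ← hs]
        abel
      have hrhs : ∑ k ∈ Finset.range (n + 1), bernsteinBasis n k s •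
            (wp i ((p + 1) - 1) + θ k • (wp i (p + 1) - wp i ((p + 1) - 1)))
          = wp i p + g s • (wp i (p + 1) - wp i p) := by
        simp only [Nat.add_sub_cancel]
        have expand : ∀ k, bernsteinBasis n k s • (wp i p + θ k • (wp i (p + 1) - wp i p))
            = bernsteinBasis n k s • wp i p
              + (θ k * bernsteinBasis n k s) • (wp i (p + 1) - wp i p) := by
          intro k
          rw [smul_add, smul_smul, mul_comm]
        rw [Finset.sum_congr rfl fun k _ => expand k, Finset.sum_add_distrib,
          ← Finset.sum_smul, ← Finset.sum_smul, bernsteinBasis_sum, one_smul,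
          ← hgf s ⟨hs0, hs1⟩]
      show wp i 0 + ∑ m ∈ Finset.Ioc 0 M, T m
          = ∑ k ∈ Finset.range (n + 1), bernsteinBasis n k s •
              (wp i ((p + 1) - 1) + θ k • (wp i (p + 1) - wp i ((p + 1) - 1)))
      rw [hlhs, ← hrhs]
  · intro i m k _ _ hm1 hmM hk
    exact hSseg i m ‹_› ‹_› hm1 hmM (segment_mem_aux _ _ (hθmem k hk).1 (hθmem k hk).2)
  · intro i j m k hi hij hj hm1 hmM hk
    have hdiff : (wp j (m - 1) + θ k • (wp j m - wp j (m - 1)))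
        - (wp i (m - 1) + θ k • (wp i m - wp i (m - 1)))
        = (wp j (m - 1) - wp i (m - 1))
          + θ k • ((wp j m - wp i m) - (wp j (m - 1) - wp i (m - 1))) := by
      module
    rw [hdiff]
    exact hRseg i j m hi hij hj hm1 hmM (segment_mem_aux _ _ (hθmem k hk).1 (hθmem k hk).2)

/-- Theorem 1 (feasibility of the optimization constraints): given waypoints `wp i m`,
convex safe flight corridors `S i m` containing the segments `[wp i (m-1), wp i m]`, and
convex relative safe flight corridors `R i j m` containing the relative segments, if
`n ≥ 2φ - 1` then there exist control points — equal to `wp i (m-1)` for the first `φ`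
indices, to `wp i m` for the last `φ` indices, and otherwise lying on the segment —
such that the resulting piecewise Bernstein trajectories satisfy the waypoint,
continuity (up to order `φ-1`), SFC and RSFC constraints. -/
theorem optimization_constraints_feasible (φ n M N : ℕ)
    (hφ : 1 ≤ φ) (hn : 2 * φ - 1 ≤ n) (hM : 1 ≤ M) (hN : 1 ≤ N)
    (wp : ℕ → ℕ → EuclideanSpace ℝ (Fin 3))
    (S : ℕ → ℕ → Set (EuclideanSpace ℝ (Fin 3)))
    (hSconv : ∀ i m, 1 ≤ i → i ≤ N → 1 ≤ m → m ≤ M → Convex ℝ (S i m))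
    (hSseg : ∀ i m, 1 ≤ i → i ≤ N → 1 ≤ m → m ≤ M →
      segment ℝ (wp i (m - 1)) (wp i m) ⊆ S i m)
    (R : ℕ → ℕ → ℕ → Set (EuclideanSpace ℝ (Fin 3)))
    (hRconv : ∀ i j m, 1 ≤ i → i < j → j ≤ N → 1 ≤ m → m ≤ M → Convex ℝ (R i j m))
    (hRseg : ∀ i j m, 1 ≤ i → i < j → j ≤ N → 1 ≤ m → m ≤ M →
      segment ℝ (wp j (m - 1) - wp i (m - 1)) (wp j m - wp i m) ⊆ R i j m) :
    ∃ c : ℕ → ℕ → ℕ → EuclideanSpace ℝ (Fin 3),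
      -- the control points have the prescribed form
      (∀ i m, 1 ≤ i → i ≤ N → 1 ≤ m → m ≤ M →
        (∀ k ≤ φ - 1, c i m k = wp i (m - 1)) ∧
        (∀ k, n - φ + 1 ≤ k → k ≤ n → c i m k = wp i m) ∧
        (∀ k ≤ n, c i m k ∈ segment ℝ (wp i (m - 1)) (wp i m))) ∧
      -- (1) start and goal waypoint constraints
      (∀ i, 1 ≤ i → i ≤ N → c i 1 0 = wp i 0 ∧ c i M n = wp i M) ∧
      -- (2) the piecewise Bernstein curve is well defined and `C^{φ-1}` on `[0, M]`
      (∀ i, 1 ≤ i → i ≤ N → ∃ P : ℝ → EuclideanSpace ℝ (Fin 3),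
        ContDiffOn ℝ (φ - 1 : ℕ) P (Set.Icc (0 : ℝ) M) ∧
        ∀ m, 1 ≤ m → m ≤ M → ∀ t ∈ Set.Icc ((m : ℝ) - 1) (m : ℝ),
          P t = ∑ k ∈ Finset.range (n + 1), bernsteinBasis n k (t - ((m : ℝ) - 1)) • c i m k) ∧
      -- (3) safe flight corridor constraints
      (∀ i m k, 1 ≤ i → i ≤ N → 1 ≤ m → m ≤ M → k ≤ n → c i m k ∈ S i m) ∧
      -- (4) relative safe flight corridor constraints
      (∀ i j m k, 1 ≤ i → i < j → j ≤ N → 1 ≤ m → m ≤ M → k ≤ n →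
        c j m k - c i m k ∈ R i j m) := by
  rcases eq_or_lt_of_le hφ with h1 | h2
  · -- φ = 1: use θ k = k / n and g = clamp
    obtain rfl : φ = 1 := h1.symm
    have hn1 : 1 ≤ n := by omega
    have hnne : (n : ℝ) ≠ 0 := Nat.cast_ne_zero.mpr (by omega)
    refine feasible_of_theta_g 1 n M N le_rfl hn hM wp S hSseg R hRseg
      (fun k => (k : ℝ) / n) ?_ ?_ ?_
      (fun s => min 1 (max s 0)) ?_ ?_ ?_ ?_
    · intro k hk
      have hk0 : k = 0 := by omega
      subst hk0; simp
    · intro k hk1 hk2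
      have hkn : k = n := by omega
      subst hkn; field_simp
    · intro k hk
      constructor
      · positivity
      · rw [div_le_one (by positivity)]
        exact_mod_cast hk
    · show ContDiff ℝ ((1 - 1 : ℕ) : WithTop ℕ∞) _
      rw [show ((1 - 1 : ℕ) : WithTop ℕ∞) = 0 by norm_num, contDiff_zero]
      exact continuous_const.min (continuous_id.max continuous_const)
    · intro s hs
      show min (1:ℝ) (max s 0) = 0
      simp [max_eq_right hs]
    · intro s hs
      show min (1:ℝ) (max s 0) = 1
      rw [max_eq_left (by linarith : (0:ℝ) ≤ s)]
      exact min_eq_left hs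
    · intro s hs
      show min (1:ℝ) (max s 0) = _
      rw [max_eq_left hs.1, min_eq_right hs.2]
      symm
      calc ∑ k ∈ Finset.range (n + 1), (k : ℝ) / n * bernsteinBasis n k s
          = (∑ k ∈ Finset.range (n + 1), (k : ℝ) * bernsteinBasis n k s) / n := by
            rw [Finset.sum_div]
            exact Finset.sum_congr rfl fun k _ => by ring
        _ = (n * s) / n := by rw [bernsteinBasis_sum_smul]
        _ = s := by field_simp
  · -- φ ≥ 2
    have hφ2 : 2 ≤ φ := h2
    have hφn : φ ≤ n := by omega
    set c₀ : ℝ := (n : ℝ) * ((n - 1).choose (φ - 1) : ℝ) with hc₀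
    set Fg : ℝ → ℝ := fun u => c₀ * ((max u 0) ^ (φ - 1) * (max (1 - u) 0) ^ (n - φ)) with hFg
    have hFgcont : Continuous Fg := by
      apply continuous_const.mul
      exact ((continuous_id.max continuous_const).pow _).mul
        (((continuous_const.sub continuous_id).max continuous_const).pow _)
    have hInt : ∀ a b : ℝ, IntervalIntegrable Fg MeasureTheory.volume a b :=
      fun a b => hFgcont.intervalIntegrable a b
    set g : ℝ → ℝ := fun s => ∫ u in (0:ℝ)..s, Fg u with hgdef
    have hgd : ∀ s, HasDerivAt g (Fg s) s := fun s =>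
      intervalIntegral.integral_hasDerivAt_right (hInt 0 s)
        (hFgcont.stronglyMeasurableAtFilter _ _) hFgcont.continuousAt
    set fP : Polynomial ℝ :=
      ∑ j ∈ Finset.range (n - φ + 1), bernsteinPolynomial ℝ n (φ + j) with hfP
    have hderP : Polynomial.derivative fP
        = (n : Polynomial ℝ) * bernsteinPolynomial ℝ (n - 1) (φ - 1) := by
      rw [hfP, map_sum]
      have hterm : ∀ j, Polynomial.derivative (bernsteinPolynomial ℝ n (φ + j)) =
          (n : Polynomial ℝ) * (bernsteinPolynomial ℝ (n - 1) (φ - 1 + j)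
            - bernsteinPolynomial ℝ (n - 1) (φ - 1 + (j + 1))) := by
        intro j
        have h1 : φ + j = (φ - 1 + j) + 1 := by omega
        have h2 : φ - 1 + (j + 1) = (φ - 1 + j) + 1 := by omega
        rw [h1, bernsteinPolynomial.derivative_succ, h2]
      rw [Finset.sum_congr rfl fun j _ => hterm j, ← Finset.mul_sum,
        Finset.sum_range_sub' (fun j => bernsteinPolynomial ℝ (n - 1) (φ - 1 + j))]
      have hz : bernsteinPolynomial ℝ (n - 1) (φ - 1 + (n - φ + 1)) = 0 := by
        rw [show φ - 1 + (n - φ + 1) = n by omega]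
        simp [bernsteinPolynomial, Nat.choose_eq_zero_of_lt (by omega : n - 1 < n)]
      rw [hz, sub_zero, add_zero]
    have hgeval : ∀ s ∈ Set.Icc (0:ℝ) 1, g s = fP.eval s := by
      intro s hs
      have hcong : Set.EqOn Fg (fun u => (Polynomial.derivative fP).eval u)
          (Set.uIcc (0:ℝ) s) := by
        intro u hu
        rw [Set.uIcc_of_le hs.1] at hu
        have hu0 : (0:ℝ) ≤ u := hu.1
        have hu1 : u ≤ 1 := le_trans hu.2 hs.2
        have e1 : max u 0 = u := max_eq_left hu0
        have e2 : max (1 - u) 0 = 1 - u := max_eq_left (by linarith)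
        have e3 : (n - 1) - (φ - 1) = n - φ := by omega
        show c₀ * ((max u 0) ^ (φ - 1) * (max (1 - u) 0) ^ (n - φ))
          = Polynomial.eval u (Polynomial.derivative fP)
        rw [hderP, Polynomial.eval_mul, Polynomial.eval_natCast, ← bernsteinBasis_eq_eval,
          bernsteinBasis, e1, e2, e3, hc₀]
        ring
      have hFTC : ∫ u in (0:ℝ)..s, (Polynomial.derivative fP).eval u
          = fP.eval s - fP.eval 0 :=
        intervalIntegral.integral_eq_sub_of_hasDerivAt (fun u _ => fP.hasDerivAt u)
          ((Polynomial.derivative fP).continuous.intervalIntegrable _ _)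
      have h0 : fP.eval 0 = 0 := by
        rw [hfP, Polynomial.eval_finset_sum]
        refine Finset.sum_eq_zero fun j _ => ?_
        rw [bernsteinPolynomial.eval_at_0]
        exact if_neg (by omega)
      show (∫ u in (0:ℝ)..s, Fg u) = fP.eval s
      rw [intervalIntegral.integral_congr hcong, hFTC, h0, sub_zero]
    have hg0 : ∀ s : ℝ, s ≤ 0 → g s = 0 := by
      intro s hsle
      have hEq : Set.EqOn Fg (fun _ => (0:ℝ)) (Set.uIcc (0:ℝ) s) := by
        intro u hu
        rw [Set.uIcc_of_ge hsle] at hu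
        have hmu : max u 0 = 0 := max_eq_right hu.2
        show c₀ * ((max u 0) ^ (φ - 1) * (max (1 - u) 0) ^ (n - φ)) = 0
        rw [hmu, zero_pow (by omega : φ - 1 ≠ 0)]
        ring
      show (∫ u in (0:ℝ)..s, Fg u) = 0
      rw [intervalIntegral.integral_congr hEq]
      simp
    have hgone : g 1 = 1 := by
      rw [hgeval 1 ⟨zero_le_one, le_rfl⟩, hfP, Polynomial.eval_finset_sum]
      have hcg : ∀ j ∈ Finset.range (n - φ + 1),
          (bernsteinPolynomial ℝ n (φ + j)).eval 1 = if j = n - φ then 1 else 0 := by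
        intro j hj
        rw [bernsteinPolynomial.eval_at_1]
        by_cases h : φ + j = n
        · rw [if_pos h, if_pos (by omega)]
        · rw [if_neg h, if_neg (by omega)]
      rw [Finset.sum_congr rfl hcg,
        Finset.sum_ite_eq' (Finset.range (n - φ + 1)) (n - φ) (fun _ => (1:ℝ))]
      simp
    have hg1 : ∀ s : ℝ, 1 ≤ s → g s = 1 := by
      intro s hs1le
      have hadd := intervalIntegral.integral_add_adjacent_intervals (hInt 0 1) (hInt 1 s)
      have hz : (∫ u in (1:ℝ)..s, Fg u) = 0 := by
        have hEq : Set.EqOn Fg (fun _ => (0:ℝ)) (Set.uIcc (1:ℝ) s) := by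
          intro u hu
          rw [Set.uIcc_of_le hs1le] at hu
          have hmu : max (1 - u) 0 = 0 := max_eq_right (by linarith [hu.1])
          show c₀ * ((max u 0) ^ (φ - 1) * (max (1 - u) 0) ^ (n - φ)) = 0
          rw [hmu, zero_pow (by omega : n - φ ≠ 0)]
          ring
        rw [intervalIntegral.integral_congr hEq]
        simp
      show (∫ u in (0:ℝ)..s, Fg u) = 1
      rw [← hadd, hz, add_zero]
      exact hgone
    have hgsmooth : ContDiff ℝ ((φ - 1 : ℕ) : WithTop ℕ∞) g := by
      obtain ⟨q, hq⟩ : ∃ q, φ = q + 2 := ⟨φ - 2, by omega⟩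
      rw [show φ - 1 = q + 1 by omega]
      rw [show ((q + 1 : ℕ) : WithTop ℕ∞) = (q : ℕ) + 1 by push_cast; rfl]
      rw [contDiff_succ_iff_deriv]
      refine ⟨fun s => (hgd s).differentiableAt, fun h => absurd h (by simp), ?_⟩
      have hd : deriv g = Fg := funext fun s => (hgd s).deriv
      rw [hd, hFg]
      refine contDiff_const.mul (ContDiff.mul ?_ ?_)
      · have hpp := pp_contDiff q
        rw [show q + 1 = φ - 1 by omega] at hpp
        exact hpp
      · have hcomp := (pp_contDiff (n - φ - 1)).comp
          (contDiff_const.sub contDiff_id : ContDiff ℝ ((n - φ - 1 : ℕ) : WithTop ℕ∞)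
            (fun u : ℝ => 1 - u))
        rw [show n - φ - 1 + 1 = n - φ by omega] at hcomp
        exact hcomp.of_le (by exact_mod_cast (by omega : q ≤ n - φ - 1))
    have hgf : ∀ s ∈ Set.Icc (0:ℝ) 1, g s = ∑ k ∈ Finset.range (n + 1),
        (if k ≤ φ - 1 then (0:ℝ) else 1) * bernsteinBasis n k s := by
      intro s hs
      rw [hgeval s hs]
      have h1 : ∀ k, (if k ≤ φ - 1 then (0:ℝ) else 1) * bernsteinBasis n k s
          = if ¬ (k ≤ φ - 1) then bernsteinBasis n k s else 0 := by
        intro k; by_cases h : k ≤ φ - 1 <;> simp [h]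
      rw [Finset.sum_congr rfl fun k _ => h1 k, ← Finset.sum_filter]
      have h2 : (Finset.range (n + 1)).filter (fun k => ¬ k ≤ φ - 1)
          = Finset.Ico φ (n + 1) := by
        ext k
        simp only [Finset.mem_filter, Finset.mem_Ico, Finset.mem_range, not_le]
        omega
      rw [h2, Finset.sum_Ico_eq_sum_range, hfP, Polynomial.eval_finset_sum,
        show n + 1 - φ = n - φ + 1 by omega]
      exact Finset.sum_congr rfl fun j _ => (bernsteinBasis_eq_eval n (φ + j) s).symm
    exact feasible_of_theta_g φ n M N hφ hn hM wp S hSseg R hRseg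
      (fun k => if k ≤ φ - 1 then 0 else 1)
      (fun k hk => if_pos hk)
      (fun k hk1 _ => by show (if k ≤ φ - 1 then (0:ℝ) else 1) = 1; rw [if_neg (by omega : ¬ k ≤ φ - 1)])
      (fun k _ => by by_cases h : k ≤ φ - 1 <;> simp [h])
      g hgsmooth hg0 hg1 hgf
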